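/- In the general intersection construction (for parameters n ≥ 4 and α), for every t with 3 ≤ t ≤ n−1 and every j with n−t+2 ≤ j ≤ n: Σ_{ℓ=n−t+1}^{j−1} ρ(A^(t)_{j,ℓ}) ≤ Σ_{ℓ=n−t}^{j−1} ρ(A^(t+1)_{j,ℓ}) − ρ(A^(t)_{j,j}). -/

import Mathlib

open scoped BigOperators

/-- Column span of a matrix with finitely many columns, as a subspace of `R → F`. -/
def colSpan (F : Type*) [Field F] {R : Type*} {m : ℕ} (M : Matrix R (Fin m) F) :
    Submodule F (R → F) :=
  Submodule.span F (Set.range fun l : Fin m => fun r => M r l)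

/-- The concatenation of the thick columns `Hcol t j'` of `H⁽ᵗ⁾` for `lo ≤ j' ≤ hi`
(all indices 0-indexed), i.e. the restriction of `H⁽ᵗ⁾` to a set of thick columns. -/
def restMat (F : Type*) [Field F] (n a : ℕ) (c : ℕ → Fin n → ℕ)
    (Hcol : ∀ t : ℕ, ∀ j : Fin n, Matrix (Fin n × Fin a) (Fin (c t j)) F)
    (t lo hi : ℕ) :
    Matrix (Fin n × Fin a)
      (Σ j' : {j' : Fin n // lo ≤ (j' : ℕ) ∧ (j' : ℕ) ≤ hi}, Fin (c t j'.val)) F :=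
  Matrix.of fun r p => Hcol t p.1.val r p.2

/-- Auxiliary: partial suprema of column spans of thick columns `n-t-1 ≤ j' < m` of
`H⁽ᵗ⁺¹⁾`. -/
def Wsup (F : Type*) [Field F] (n a : ℕ) (c : ℕ → Fin n → ℕ)
    (Hcol : ∀ t : ℕ, ∀ j : Fin n, Matrix (Fin n × Fin a) (Fin (c t j)) F)
    (t m : ℕ) : Submodule F ((Fin n × Fin a) → F) :=
  ⨆ j' : {j' : Fin n // n - t - 1 ≤ (j' : ℕ) ∧ (j' : ℕ) < m},
    colSpan F (Hcol (t + 1) j'.val)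

theorem stmt16 (F : Type*) [Field F] (n a : ℕ) (hn : 4 ≤ n) (ha : 1 ≤ a)
    (c : ℕ → Fin n → ℕ)
    (Hcol : ∀ t : ℕ, ∀ j : Fin n, Matrix (Fin n × Fin a) (Fin (c t j)) F)
    -- the top level `H⁽ⁿ⁾` has thick columns of width `α` ...
    (hcn : ∀ j : Fin n, c n j = a)
    -- ... and its diagonal blocks `A⁽ⁿ⁾_{i,i}` equal the identity `I_α`
    (hdiag : ∀ i : Fin n, ∀ x : Fin a, ∀ y : Fin (c n i),
      Hcol n i (i, x) y = if (x : ℕ) = (y : ℕ) then 1 else 0)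
    -- for `3 ≤ t ≤ n-1`, the columns of the `j`-th thick column of `H⁽ᵗ⁾` form a
    -- basis of `S(H⁽ᵗ⁺¹⁾_j) ∩ S(H⁽ᵗ⁺¹⁾|_{{n-t, …, j-1}})` (set 0-indexed here)
    (hbasis : ∀ t : ℕ, 3 ≤ t → t ≤ n - 1 → ∀ j : Fin n, n - t ≤ (j : ℕ) →
      LinearIndependent F
        (fun l : Fin (c t j) => (fun r => Hcol t j r l : (Fin n × Fin a) → F)) ∧
      colSpan F (Hcol t j)
        = colSpan F (Hcol (t + 1) j) ⊓
            ⨆ j' : {j' : Fin n // n - t - 1 ≤ (j' : ℕ) ∧ (j' : ℕ) < (j : ℕ)},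
              colSpan F (Hcol (t + 1) j'.val))
    :
    ∀ t : ℕ, 3 ≤ t → t ≤ n - 1 → ∀ j : Fin n, n - t + 1 ≤ (j : ℕ) →
      (∑ l ∈ Finset.univ.filter (fun l : Fin n => n - t ≤ (l : ℕ) ∧ (l : ℕ) < (j : ℕ)),
          ((Matrix.of fun (x : Fin a) (y : Fin (c t l)) => Hcol t l (j, x) y).rank : ℤ))
        ≤ (∑ l ∈ Finset.univ.filter
              (fun l : Fin n => n - t - 1 ≤ (l : ℕ) ∧ (l : ℕ) < (j : ℕ)),
            ((Matrix.of fun (x : Fin a) (y : Fin (c (t + 1) l)) =>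
                Hcol (t + 1) l (j, x) y).rank : ℤ))
          - ((Matrix.of fun (x : Fin a) (l : Fin (c t j)) => Hcol t j (j, x) l).rank : ℤ) := by
  intro t ht3 htn j hj
  -- the projection to the `j`-th thick row
  set π : ((Fin n × Fin a) → F) →ₗ[F] (Fin a → F) :=
    LinearMap.funLeft F F (fun x : Fin a => ((j, x) : Fin n × Fin a)) with hπ
  -- rank of the `j`-th block row of a matrix = finrank of the projected column span
  have hrank : ∀ (m : ℕ) (M : Matrix (Fin n × Fin a) (Fin m) F),
      (Matrix.of fun (x : Fin a) (y : Fin m) => M (j, x) y).rank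
        = Module.finrank F ((colSpan F M).map π) := by
    intro m M
    have hs : Set.range (Matrix.col (Matrix.of fun (x : Fin a) (y : Fin m) =>
          M (j, x) y))
        = ⇑π '' Set.range (fun l : Fin m => fun r => M r l) := by
      rw [← Set.range_comp]; rfl
    rw [Matrix.rank_eq_finrank_span_cols, colSpan, Submodule.map_span, hs]
  -- submodularity of `V ↦ finrank (V.map π)`
  have hsub : ∀ A B : Submodule F ((Fin n × Fin a) → F),
      Module.finrank F ((A ⊓ B).map π) + Module.finrank F ((A ⊔ B).map π)
        ≤ Module.finrank F (A.map π) + Module.finrank F (B.map π) := by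
    intro A B
    rw [Submodule.map_sup]
    have h1 : (A ⊓ B).map π ≤ A.map π ⊓ B.map π :=
      le_inf (Submodule.map_mono inf_le_left) (Submodule.map_mono inf_le_right)
    have h2 : Module.finrank F ↥((A ⊓ B).map π)
        ≤ Module.finrank F ↥(A.map π ⊓ B.map π) := Submodule.finrank_mono h1
    have h3 : Module.finrank F ↥(A.map π ⊔ B.map π) + Module.finrank F ↥(A.map π ⊓ B.map π)
        = Module.finrank F ↥(A.map π) + Module.finrank F ↥(B.map π) :=
      Submodule.finrank_sup_add_finrank_inf_eq _ _
    omega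
  have hnt1 : n - t - 1 < n := by omega
  have hvmk : (((⟨n - t - 1, hnt1⟩ : Fin n)) : ℕ) = n - t - 1 := rfl
  -- base value of the partial suprema
  have hW1 : Wsup F n a c Hcol t (n - t) = colSpan F (Hcol (t + 1) ⟨n - t - 1, hnt1⟩) := by
    apply le_antisymm
    · apply iSup_le
      intro p
      have hv : (p.val : ℕ) = n - t - 1 := by
        obtain ⟨h1, h2⟩ := p.2
        omega
      exact le_of_eq (congrArg (fun x => colSpan F (Hcol (t + 1) x)) (Fin.ext hv))
    · exact le_iSup (fun p : {j' : Fin n // n - t - 1 ≤ (j' : ℕ) ∧ (j' : ℕ) < n - t} =>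
        colSpan F (Hcol (t + 1) p.val))
        ⟨⟨n - t - 1, hnt1⟩, le_rfl, show n - t - 1 < n - t by omega⟩
  -- recurrence of the partial suprema
  have hW2 : ∀ (m : ℕ) (hm : m < n), n - t ≤ m →
      Wsup F n a c Hcol t (m + 1)
        = colSpan F (Hcol (t + 1) ⟨m, hm⟩) ⊔ Wsup F n a c Hcol t m := by
    intro m hm hm2
    apply le_antisymm
    · apply iSup_le
      intro p
      obtain ⟨hp1, hp2⟩ := p.2
      rcases lt_or_ge (p.val : ℕ) m with h | h
      · exact le_sup_of_le_right (le_iSup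
          (fun q : {j' : Fin n // n - t - 1 ≤ (j' : ℕ) ∧ (j' : ℕ) < m} =>
            colSpan F (Hcol (t + 1) q.val)) ⟨p.val, hp1, h⟩)
      · have hv : (p.val : ℕ) = m := by omega
        exact le_sup_of_le_left
          (le_of_eq (congrArg (fun x => colSpan F (Hcol (t + 1) x)) (Fin.ext hv)))
    · apply sup_le
      · exact le_iSup (fun q : {j' : Fin n // n - t - 1 ≤ (j' : ℕ) ∧ (j' : ℕ) < m + 1} =>
          colSpan F (Hcol (t + 1) q.val))
          ⟨⟨m, hm⟩, show n - t - 1 ≤ m by omega, show m < m + 1 by omega⟩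
      · apply iSup_le
        intro p
        obtain ⟨hp1, hp2⟩ := p.2
        exact le_iSup (fun q : {j' : Fin n // n - t - 1 ≤ (j' : ℕ) ∧ (j' : ℕ) < m + 1} =>
          colSpan F (Hcol (t + 1) q.val)) ⟨p.val, hp1, by omega⟩
  -- main telescoping induction
  have key : ∀ m : ℕ, n - t ≤ m → m ≤ n →
      (∑ l ∈ Finset.univ.filter (fun l : Fin n => n - t ≤ (l : ℕ) ∧ (l : ℕ) < m),
          Module.finrank F ((colSpan F (Hcol t l)).map π))
        + Module.finrank F ((Wsup F n a c Hcol t m).map π)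
      ≤ ∑ l ∈ Finset.univ.filter (fun l : Fin n => n - t - 1 ≤ (l : ℕ) ∧ (l : ℕ) < m),
          Module.finrank F ((colSpan F (Hcol (t + 1) l)).map π) := by
    intro m hm
    induction m, hm using Nat.le_induction with
    | base =>
      intro _
      have e1 : Finset.univ.filter
          (fun l : Fin n => n - t ≤ (l : ℕ) ∧ (l : ℕ) < n - t) = ∅ := by
        ext l
        simp only [Finset.mem_filter, Finset.mem_univ, true_and, Finset.notMem_empty,
          iff_false]
        omega
      have e2 : Finset.univ.filter
          (fun l : Fin n => n - t - 1 ≤ (l : ℕ) ∧ (l : ℕ) < n - t)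
          = {⟨n - t - 1, hnt1⟩} := by
        ext l
        simp only [Finset.mem_filter, Finset.mem_univ, true_and, Finset.mem_singleton,
          Fin.ext_iff, hvmk]
        omega
      rw [e1, e2, Finset.sum_empty, Finset.sum_singleton, zero_add, hW1]
    | succ m hm ih =>
      intro hmn
      have hmlt : m < n := by omega
      have hvm : (((⟨m, hmlt⟩ : Fin n)) : ℕ) = m := rfl
      have ih' := ih (by omega)
      have e1 : Finset.univ.filter
          (fun l : Fin n => n - t ≤ (l : ℕ) ∧ (l : ℕ) < m + 1)
          = insert (⟨m, hmlt⟩ : Fin n)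
              (Finset.univ.filter (fun l : Fin n => n - t ≤ (l : ℕ) ∧ (l : ℕ) < m)) := by
        ext l
        simp only [Finset.mem_filter, Finset.mem_univ, true_and, Finset.mem_insert,
          Fin.ext_iff, hvm]
        omega
      have e2 : Finset.univ.filter
          (fun l : Fin n => n - t - 1 ≤ (l : ℕ) ∧ (l : ℕ) < m + 1)
          = insert (⟨m, hmlt⟩ : Fin n)
              (Finset.univ.filter (fun l : Fin n => n - t - 1 ≤ (l : ℕ) ∧ (l : ℕ) < m)) := by
        ext l
        simp only [Finset.mem_filter, Finset.mem_univ, true_and, Finset.mem_insert,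
          Fin.ext_iff, hvm]
        omega
      have nm1 : (⟨m, hmlt⟩ : Fin n) ∉
          Finset.univ.filter (fun l : Fin n => n - t ≤ (l : ℕ) ∧ (l : ℕ) < m) := by
        simp only [Finset.mem_filter, Finset.mem_univ, true_and, hvm]
        omega
      have nm2 : (⟨m, hmlt⟩ : Fin n) ∉
          Finset.univ.filter (fun l : Fin n => n - t - 1 ≤ (l : ℕ) ∧ (l : ℕ) < m) := by
        simp only [Finset.mem_filter, Finset.mem_univ, true_and, hvm]
        omega
      rw [e1, e2, Finset.sum_insert nm1, Finset.sum_insert nm2]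
      have hS : colSpan F (Hcol t ⟨m, hmlt⟩)
          = colSpan F (Hcol (t + 1) ⟨m, hmlt⟩) ⊓ Wsup F n a c Hcol t m :=
        (hbasis t ht3 htn ⟨m, hmlt⟩ hm).2
      have hWrec := hW2 m hmlt hm
      have hsub' := hsub (colSpan F (Hcol (t + 1) ⟨m, hmlt⟩)) (Wsup F n a c Hcol t m)
      rw [hS, hWrec]
      omega
  -- conclude
  have hjn : (j : ℕ) ≤ n := le_of_lt j.isLt
  have hkey := key (j : ℕ) (by omega) hjn
  have hSj : colSpan F (Hcol t j)
      = colSpan F (Hcol (t + 1) j) ⊓ Wsup F n a c Hcol t (j : ℕ) :=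
    (hbasis t ht3 htn j (by omega)).2
  have hle : Module.finrank F ((colSpan F (Hcol t j)).map π)
      ≤ Module.finrank F ((Wsup F n a c Hcol t (j : ℕ)).map π) := by
    apply Submodule.finrank_mono
    apply Submodule.map_mono
    rw [hSj]
    exact inf_le_right
  have s1 : ∑ l ∈ Finset.univ.filter
        (fun l : Fin n => n - t ≤ (l : ℕ) ∧ (l : ℕ) < (j : ℕ)),
        (Matrix.of fun (x : Fin a) (y : Fin (c t l)) => Hcol t l (j, x) y).rank
      = ∑ l ∈ Finset.univ.filter
          (fun l : Fin n => n - t ≤ (l : ℕ) ∧ (l : ℕ) < (j : ℕ)),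
          Module.finrank F ((colSpan F (Hcol t l)).map π) :=
    Finset.sum_congr rfl fun l _ => hrank _ _
  have s2 : ∑ l ∈ Finset.univ.filter
        (fun l : Fin n => n - t - 1 ≤ (l : ℕ) ∧ (l : ℕ) < (j : ℕ)),
        (Matrix.of fun (x : Fin a) (y : Fin (c (t + 1) l)) => Hcol (t + 1) l (j, x) y).rank
      = ∑ l ∈ Finset.univ.filter
          (fun l : Fin n => n - t - 1 ≤ (l : ℕ) ∧ (l : ℕ) < (j : ℕ)),
          Module.finrank F ((colSpan F (Hcol (t + 1) l)).map π) :=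
    Finset.sum_congr rfl fun l _ => hrank _ _
  have main : (∑ l ∈ Finset.univ.filter
        (fun l : Fin n => n - t ≤ (l : ℕ) ∧ (l : ℕ) < (j : ℕ)),
        (Matrix.of fun (x : Fin a) (y : Fin (c t l)) => Hcol t l (j, x) y).rank)
      + (Matrix.of fun (x : Fin a) (l : Fin (c t j)) => Hcol t j (j, x) l).rank
      ≤ ∑ l ∈ Finset.univ.filter
          (fun l : Fin n => n - t - 1 ≤ (l : ℕ) ∧ (l : ℕ) < (j : ℕ)),
          (Matrix.of fun (x : Fin a) (y : Fin (c (t + 1) l)) =>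
            Hcol (t + 1) l (j, x) y).rank := by
    rw [s1, s2, hrank (c t j) (Hcol t j)]
    omega
  have main' := (Nat.cast_le (α := ℤ)).mpr main
  push_cast at main'
  linarith
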